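/- Let θ ∈ (0, π/2) and let u be a model eigenfunction of H(θ) with eigenvalue σ, and set f₀ := (2 sin(2θ))⁻¹ (sin²θ · s² u − ∂_s² u). Then (H(θ) − σ) ∂_s f₀ = −t ∂_s² u + 2 sin θ · V_θ f₀ on ℝ²₊, and ∫_{ℝ²₊} (−t ∂_s² u + 2 sin θ · V_θ f₀) u ds dt = 0. -/

import Mathlib

open Real MeasureTheory Set

noncomputable section

/-- Partial derivative with respect to the first variable. -/
def pd1 (u : ℝ → ℝ → ℝ) : ℝ → ℝ → ℝ := fun s t => deriv (fun x => u x t) s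

/-- Partial derivative with respect to the second variable. -/
def pd2 (u : ℝ → ℝ → ℝ) : ℝ → ℝ → ℝ := fun s t => deriv (fun y => u s y) t

/-- The potential `V_θ(s,t) = t cos θ − s sin θ`. -/
def Vpot (θ : ℝ) : ℝ → ℝ → ℝ := fun s t => t * Real.cos θ - s * Real.sin θ

/-- The operator `H(θ) = −∂_s² − ∂_t² + V_θ²` applied to `u`. -/
def Hop (θ : ℝ) (u : ℝ → ℝ → ℝ) : ℝ → ℝ → ℝ :=
  fun s t => - pd1 (pd1 u) s t - pd2 (pd2 u) s t + (Vpot θ s t)^2 * u s t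

/-- Integral over the half-plane `{t > 0}` with respect to `ds dt`. -/
def intHalf (f : ℝ → ℝ → ℝ) : ℝ := ∫ s : ℝ, ∫ t in Set.Ioi (0:ℝ), f s t

/-- Schwartz-class on the closed half-plane: all iterated partial derivatives decay
faster than any power of `|s| + t`. -/
def SchwartzHalf (u : ℝ → ℝ → ℝ) : Prop :=
  ∀ k l n : ℕ, ∃ C : ℝ, ∀ s t : ℝ, 0 ≤ t →
    |pd1^[k] (pd2^[l] u) s t| ≤ C * (1 + |s| + t) ^ (-(n:ℝ))

/-- A model eigenfunction of `H(θ)` with eigenvalue `σ`: smooth up to the boundary,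
Schwartz-class, `L²`-normalized, Neumann boundary condition, and `H(θ)u = σu` on `{t ≥ 0}`. -/
structure IsModelEigen (θ : ℝ) (u : ℝ → ℝ → ℝ) (σ : ℝ) : Prop where
  smooth : ∀ n : ℕ, ContDiff ℝ n (fun p : ℝ × ℝ => u p.1 p.2)
  schwartz : SchwartzHalf u
  normalized : intHalf (fun s t => (u s t)^2) = 1
  neumann : ∀ s : ℝ, pd2 u s 0 = 0
  eigen : ∀ s t : ℝ, 0 ≤ t → Hop θ u s t = σ * u s t

section Helpers
open Filter Topology
def Smo (v : ℝ → ℝ → ℝ) : Prop := ∀ n : ℕ, ContDiff ℝ n fun p : ℝ × ℝ => v p.1 p.2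

variable {v : ℝ → ℝ → ℝ}

lemma Smo.diff1 (hv : Smo v) (s t : ℝ) : DifferentiableAt ℝ (fun x => v x t) s :=
  (((hv 1).differentiable (by norm_num)) (s, t)).comp (f := fun x : ℝ => (x, t)) s
    ((differentiableAt_id.prodMk (differentiableAt_const t)))

lemma Smo.diff2 (hv : Smo v) (s t : ℝ) : DifferentiableAt ℝ (fun y => v s y) t :=
  (((hv 1).differentiable (by norm_num)) (s, t)).comp t
    (((differentiableAt_const s).prodMk differentiableAt_id))

lemma Smo.hasDerivAt1 (hv : Smo v) (s t : ℝ) :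
    HasDerivAt (fun x => v x t) (pd1 v s t) s := (hv.diff1 s t).hasDerivAt

lemma Smo.hasDerivAt2 (hv : Smo v) (s t : ℝ) :
    HasDerivAt (fun y => v s y) (pd2 v s t) t := (hv.diff2 s t).hasDerivAt

lemma Smo.pd1_eq_fderiv (hv : Smo v) (s t : ℝ) :
    pd1 v s t = fderiv ℝ (fun p : ℝ × ℝ => v p.1 p.2) (s, t) (1, 0) := by
  have h1 : HasFDerivAt (fun p : ℝ × ℝ => v p.1 p.2)
      (fderiv ℝ (fun p : ℝ × ℝ => v p.1 p.2) (s, t)) (s, t) :=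
    (((hv 1).differentiable (by norm_num)) (s, t)).hasFDerivAt
  have h2 : HasDerivAt (fun x : ℝ => (x, t)) ((1 : ℝ), (0 : ℝ)) s := by
    simpa using ((hasDerivAt_id s).prodMk (hasDerivAt_const s t))
  exact (h1.comp_hasDerivAt s h2).deriv

lemma Smo.pd2_eq_fderiv (hv : Smo v) (s t : ℝ) :
    pd2 v s t = fderiv ℝ (fun p : ℝ × ℝ => v p.1 p.2) (s, t) (0, 1) := by
  have h1 : HasFDerivAt (fun p : ℝ × ℝ => v p.1 p.2)
      (fderiv ℝ (fun p : ℝ × ℝ => v p.1 p.2) (s, t)) (s, t) :=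
    (((hv 1).differentiable (by norm_num)) (s, t)).hasFDerivAt
  have h2 : HasDerivAt (fun y : ℝ => (s, y)) ((0 : ℝ), (1 : ℝ)) t := by
    simpa using ((hasDerivAt_const t s).prodMk (hasDerivAt_id t))
  exact (h1.comp_hasDerivAt t h2).deriv

lemma Smo.smooth_pd1 (hv : Smo v) : Smo (pd1 v) := by
  intro n
  have h : ContDiff ℝ n fun p : ℝ × ℝ =>
      fderiv ℝ (fun q : ℝ × ℝ => v q.1 q.2) p (1, 0) := by
    exact ((hv (n+1)).fderiv_right (by exact_mod_cast le_rfl)).clm_apply contDiff_const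
  have e : (fun p : ℝ × ℝ => pd1 v p.1 p.2)
      = fun p : ℝ × ℝ => fderiv ℝ (fun q : ℝ × ℝ => v q.1 q.2) p (1, 0) :=
    funext fun p => hv.pd1_eq_fderiv p.1 p.2
  rw [e]; exact h

lemma Smo.smooth_pd2 (hv : Smo v) : Smo (pd2 v) := by
  intro n
  have h : ContDiff ℝ n fun p : ℝ × ℝ =>
      fderiv ℝ (fun q : ℝ × ℝ => v q.1 q.2) p (0, 1) := by
    exact ((hv (n+1)).fderiv_right (by exact_mod_cast le_rfl)).clm_apply contDiff_const
  have e : (fun p : ℝ × ℝ => pd2 v p.1 p.2)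
      = fun p : ℝ × ℝ => fderiv ℝ (fun q : ℝ × ℝ => v q.1 q.2) p (0, 1) :=
    funext fun p => hv.pd2_eq_fderiv p.1 p.2
  rw [e]; exact h

lemma Smo.clairaut (hv : Smo v) (s t : ℝ) : pd1 (pd2 v) s t = pd2 (pd1 v) s t := by
  set V : ℝ × ℝ → ℝ := fun p => v p.1 p.2 with hV
  set G : ℝ × ℝ → (ℝ × ℝ →L[ℝ] ℝ) := fderiv ℝ V with hG
  have hGdiff : DifferentiableAt ℝ G (s, t) :=
    (((hv 2).fderiv_right (m := 1) (by exact_mod_cast le_rfl)).differentiable (by norm_num)) (s, t)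
  set F2 : ℝ × ℝ →L[ℝ] (ℝ × ℝ →L[ℝ] ℝ) := fderiv ℝ G (s, t) with hF2
  have hsym : ∀ a b : ℝ × ℝ, F2 a b = F2 b a := by
    intro a b
    exact ((hv 2).contDiffAt (x := (s, t))).isSymmSndFDerivAt (by norm_num) a b
  -- helper : for e d : ℝ × ℝ, derivative of (x ↦ G (line x) e) along line with dir d is F2 d e
  have key : ∀ (L : ℝ → ℝ × ℝ) (x : ℝ) (d e : ℝ × ℝ), HasDerivAt L d x → L x = (s, t) →
      HasDerivAt (fun x => G (L x) e) (F2 d e) x := by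
    intro L x d e hL hLx
    have h0 : HasFDerivAt G F2 (L x) := by rw [hLx]; exact hGdiff.hasFDerivAt
    have h1 : HasDerivAt (fun x => G (L x)) (F2 d) x := by
      simpa [Function.comp_def] using h0.comp_hasDerivAt x hL
    have h2 := (ContinuousLinearMap.apply ℝ ℝ e).hasFDerivAt.comp_hasDerivAt x h1
    simpa [Function.comp_def] using h2
  have e1 : pd1 (pd2 v) s t = F2 (1, 0) (0, 1) := by
    have hfun : (fun x => pd2 v x t) = fun x => G (x, t) (0, 1) :=
      funext fun x => hv.pd2_eq_fderiv x t
    have := key (fun x => (x, t)) s (1, 0) (0, 1)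
      (by simpa using ((hasDerivAt_id s).prodMk (hasDerivAt_const s t))) rfl
    show deriv (fun x => pd2 v x t) s = _
    rw [hfun]; exact this.deriv
  have e2 : pd2 (pd1 v) s t = F2 (0, 1) (1, 0) := by
    have hfun : (fun y => pd1 v s y) = fun y => G (s, y) (1, 0) :=
      funext fun y => hv.pd1_eq_fderiv s y
    have := key (fun y => (s, y)) t (0, 1) (1, 0)
      (by simpa using ((hasDerivAt_const t s).prodMk (hasDerivAt_id t))) rfl
    show deriv (fun y => pd1 v s y) t = _
    rw [hfun]; exact this.deriv
  rw [e1, e2, hsym]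

lemma pd1_eq_of {f : ℝ → ℝ → ℝ} {F : ℝ → ℝ} {s t d : ℝ}
    (h : ∀ x, f x t = F x) (hF : HasDerivAt F d s) : pd1 f s t = d := by
  show deriv (fun x => f x t) s = d
  rw [funext h]; exact hF.deriv

lemma pd2_eq_of {f : ℝ → ℝ → ℝ} {F : ℝ → ℝ} {s t d : ℝ}
    (h : ∀ y, f s y = F y) (hF : HasDerivAt F d t) : pd2 f s t = d := by
  show deriv (fun y => f s y) t = d
  rw [funext h]; exact hF.deriv

lemma pd1_zero_slice {f : ℝ → ℝ → ℝ} (h : ∀ x, f x 0 = 0) (s : ℝ) : pd1 f s 0 = 0 :=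
  pd1_eq_of h (hasDerivAt_const s 0)

lemma Smo.addF {f g : ℝ → ℝ → ℝ} (hf : Smo f) (hg : Smo g) :
    Smo fun s t => f s t + g s t := fun n => (hf n).add (hg n)
lemma Smo.subF {f g : ℝ → ℝ → ℝ} (hf : Smo f) (hg : Smo g) :
    Smo fun s t => f s t - g s t := fun n => (hf n).sub (hg n)
lemma Smo.mulF {f g : ℝ → ℝ → ℝ} (hf : Smo f) (hg : Smo g) :
    Smo fun s t => f s t * g s t := fun n => (hf n).mul (hg n)
lemma Smo.constMul {f : ℝ → ℝ → ℝ} (hf : Smo f) (a : ℝ) :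
    Smo fun s t => a * f s t := fun n => contDiff_const.mul (hf n)
lemma smo_fst : Smo fun s _ : ℝ => s := fun n => contDiff_fst
lemma smo_snd : Smo fun _ t : ℝ => t := fun n => contDiff_snd
lemma smo_const (a : ℝ) : Smo fun _ _ : ℝ => a := fun n => contDiff_const

lemma Smo.contSlice2 {f : ℝ → ℝ → ℝ} (hf : Smo f) (s : ℝ) : Continuous (f s) :=
  ((hf 0).continuous).comp (continuous_const.prodMk continuous_id)

lemma Smo.contSlice1 {f : ℝ → ℝ → ℝ} (hf : Smo f) (t : ℝ) : Continuous fun s => f s t :=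
  ((hf 0).continuous).comp (continuous_id.prodMk continuous_const)

/-- Decay class on the half plane. -/
def Dcy (f : ℝ → ℝ → ℝ) : Prop :=
  ∀ n : ℕ, ∃ C : ℝ, 0 ≤ C ∧ ∀ s t : ℝ, 0 ≤ t →
    |f s t| ≤ C / ((1 + |s|) ^ n * (1 + t) ^ n)

lemma Dcy.congr {f g : ℝ → ℝ → ℝ} (hg : Dcy g) (h : ∀ s t, 0 ≤ t → f s t = g s t) :
    Dcy f := by
  intro n; obtain ⟨C, h0, hC⟩ := hg n
  exact ⟨C, h0, fun s t ht => (h s t ht) ▸ hC s t ht⟩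

lemma Dcy.addF {f g : ℝ → ℝ → ℝ} (hf : Dcy f) (hg : Dcy g) :
    Dcy fun s t => f s t + g s t := by
  intro n
  obtain ⟨C, hC0, hC⟩ := hf n; obtain ⟨D, hD0, hD⟩ := hg n
  refine ⟨C + D, by linarith, fun s t ht => ?_⟩
  calc |f s t + g s t| ≤ |f s t| + |g s t| := abs_add_le _ _
    _ ≤ C / ((1 + |s|) ^ n * (1 + t) ^ n) + D / ((1 + |s|) ^ n * (1 + t) ^ n) :=
        add_le_add (hC s t ht) (hD s t ht)
    _ = (C + D) / ((1 + |s|) ^ n * (1 + t) ^ n) := by ring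

lemma Dcy.negF {f : ℝ → ℝ → ℝ} (hf : Dcy f) : Dcy fun s t => -f s t := by
  intro n; obtain ⟨C, hC0, hC⟩ := hf n
  exact ⟨C, hC0, fun s t ht => by rw [abs_neg]; exact hC s t ht⟩

lemma Dcy.subF {f g : ℝ → ℝ → ℝ} (hf : Dcy f) (hg : Dcy g) :
    Dcy fun s t => f s t - g s t := by
  have := hf.addF hg.negF; exact this.congr fun s t ht => by ring

lemma Dcy.constMul {f : ℝ → ℝ → ℝ} (hf : Dcy f) (a : ℝ) :
    Dcy fun s t => a * f s t := by
  intro n; obtain ⟨C, hC0, hC⟩ := hf n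
  refine ⟨|a| * C, by positivity, fun s t ht => ?_⟩
  rw [abs_mul, mul_div_assoc]
  exact mul_le_mul_of_nonneg_left (hC s t ht) (abs_nonneg a)

lemma one_le_onet {t : ℝ} (ht : 0 ≤ t) : (1:ℝ) ≤ 1 + t := by linarith
lemma one_le_ones (s : ℝ) : (1:ℝ) ≤ 1 + |s| := by
  have := abs_nonneg s; linarith

lemma Dcy.mulF {f g : ℝ → ℝ → ℝ} (hf : Dcy f) (hg : Dcy g) :
    Dcy fun s t => f s t * g s t := by
  intro n
  obtain ⟨C, hC0, hC⟩ := hf n; obtain ⟨D, hD0, hD⟩ := hg n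
  refine ⟨C * D, by positivity, fun s t ht => ?_⟩
  have hX : (1:ℝ) ≤ (1 + |s|) ^ n := one_le_pow₀ (one_le_ones s)
  have hY : (1:ℝ) ≤ (1 + t) ^ n := one_le_pow₀ (one_le_onet ht)
  have hD1 : (1:ℝ) ≤ (1 + |s|) ^ n * (1 + t) ^ n := one_le_mul_of_one_le_of_one_le hX hY
  have hpos : (0:ℝ) < (1 + |s|) ^ n * (1 + t) ^ n := by linarith
  calc |f s t * g s t| = |f s t| * |g s t| := abs_mul _ _
    _ ≤ (C / ((1 + |s|) ^ n * (1 + t) ^ n)) * (D / ((1 + |s|) ^ n * (1 + t) ^ n)) :=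
        mul_le_mul (hC s t ht) (hD s t ht) (abs_nonneg _) (by positivity)
    _ = (C * D) / (((1 + |s|) ^ n * (1 + t) ^ n) * ((1 + |s|) ^ n * (1 + t) ^ n)) := by
        ring
    _ ≤ (C * D) / ((1 + |s|) ^ n * (1 + t) ^ n) := by
        gcongr <;> nlinarith

lemma Dcy.mulS {f : ℝ → ℝ → ℝ} (hf : Dcy f) : Dcy fun s t => s * f s t := by
  intro n
  obtain ⟨C, hC0, hC⟩ := hf (n + 1)
  refine ⟨C, hC0, fun s t ht => ?_⟩
  have hX : (1:ℝ) ≤ 1 + |s| := one_le_ones s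
  have hY : (1:ℝ) ≤ 1 + t := one_le_onet ht
  calc |s * f s t| = |s| * |f s t| := abs_mul _ _
    _ ≤ (1 + |s|) * (C / ((1 + |s|) ^ (n+1) * (1 + t) ^ (n+1))) :=
        mul_le_mul (by linarith [abs_nonneg s]) (hC s t ht) (abs_nonneg _) (by linarith)
    _ = C / ((1 + |s|) ^ n * (1 + t) ^ (n+1)) := by
        have h1 : (1 + |s|) ≠ 0 := by linarith
        have h2 : (1 + t) ≠ 0 := by linarith
        field_simp
        ring
    _ ≤ C / ((1 + |s|) ^ n * (1 + t) ^ n) := by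
        gcongr
        · exact Nat.le_succ n

lemma Dcy.mulT {f : ℝ → ℝ → ℝ} (hf : Dcy f) : Dcy fun s t => t * f s t := by
  intro n
  obtain ⟨C, hC0, hC⟩ := hf (n + 1)
  refine ⟨C, hC0, fun s t ht => ?_⟩
  have hX : (1:ℝ) ≤ 1 + |s| := one_le_ones s
  have hY : (1:ℝ) ≤ 1 + t := one_le_onet ht
  calc |t * f s t| = |t| * |f s t| := abs_mul _ _
    _ ≤ (1 + t) * (C / ((1 + |s|) ^ (n+1) * (1 + t) ^ (n+1))) :=
        mul_le_mul (by rw [abs_of_nonneg ht]; linarith) (hC s t ht) (abs_nonneg _)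
          (by linarith)
    _ = C / ((1 + |s|) ^ (n+1) * (1 + t) ^ n) := by
        have h1 : (1 + |s|) ≠ 0 := by linarith
        have h2 : (1 + t) ≠ 0 := by linarith
        field_simp
        ring
    _ ≤ C / ((1 + |s|) ^ n * (1 + t) ^ n) := by
        gcongr
        · exact Nat.le_succ n

lemma SchwartzHalf.dcy {u : ℝ → ℝ → ℝ} (hu : SchwartzHalf u) (k l : ℕ) :
    Dcy (pd1^[k] (pd2^[l] u)) := by
  intro n
  obtain ⟨C, hC⟩ := hu k l (2 * n)
  refine ⟨max C 0, le_max_right _ _, fun s t ht => ?_⟩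
  have hZ : (0:ℝ) < 1 + |s| + t := by have := abs_nonneg s; linarith
  have h1 : (1 + |s| + t) ^ (-((2*n : ℕ):ℝ)) = ((1 + |s| + t) ^ (2*n : ℕ))⁻¹ := by
    rw [Real.rpow_neg hZ.le, Real.rpow_natCast]
  have h2 : ((1 + |s| + t) ^ (2*n : ℕ))⁻¹ ≤ ((1 + |s|) ^ n * (1 + t) ^ n)⁻¹ := by
    apply inv_anti₀
    · positivity
    · calc (1 + |s|) ^ n * (1 + t) ^ n = ((1 + |s|) * (1 + t)) ^ n := (mul_pow _ _ _).symm
        _ ≤ ((1 + |s| + t) ^ 2) ^ n := by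
            apply pow_le_pow_left₀ (by positivity)
            nlinarith [abs_nonneg s]
        _ = (1 + |s| + t) ^ (2 * n) := by rw [← pow_mul]
  calc |pd1^[k] (pd2^[l] u) s t| ≤ C * (1 + |s| + t) ^ (-((2*n : ℕ):ℝ)) := hC s t ht
    _ ≤ max C 0 * ((1 + |s| + t) ^ (2*n : ℕ))⁻¹ := by
        rw [h1]
        apply mul_le_mul_of_nonneg_right (le_max_left _ _) (by positivity)
    _ ≤ max C 0 * ((1 + |s|) ^ n * (1 + t) ^ n)⁻¹ :=
        mul_le_mul_of_nonneg_left h2 (le_max_right _ _)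
    _ = max C 0 / ((1 + |s|) ^ n * (1 + t) ^ n) := (div_eq_mul_inv _ _).symm

lemma integrable_aux1 : Integrable (fun s : ℝ => ((1 + |s|) ^ 2)⁻¹) volume := by
  have h := integrable_one_add_norm (E := ℝ) (μ := volume) (r := 2) (by norm_num)
  apply h.congr
  filter_upwards with s
  rw [Real.norm_eq_abs, Real.rpow_neg (by positivity), Real.rpow_two]

lemma integrable_aux2 : IntegrableOn (fun t : ℝ => ((1 + t) ^ 2)⁻¹) (Ioi 0) volume := by
  have h := integrable_aux1.integrableOn (s := Ioi (0:ℝ))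
  apply h.congr_fun ?_ measurableSet_Ioi
  intro t ht
  simp only []
  rw [abs_of_nonneg (le_of_lt ht)]

/-- integrability in `t` over `Ioi 0`, for fixed `s`. -/
lemma Dcy.intT {f : ℝ → ℝ → ℝ} (hf : Dcy f) (hc : ∀ s, Continuous (f s)) (s : ℝ) :
    IntegrableOn (f s) (Ioi 0) volume := by
  obtain ⟨C, hC0, hC⟩ := hf 2
  apply Integrable.mono' (g := fun t => (C / (1 + |s|) ^ 2) * ((1 + t) ^ 2)⁻¹)
    (integrable_aux2.const_mul _) ((hc s).aestronglyMeasurable)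
  filter_upwards [ae_restrict_mem measurableSet_Ioi] with t ht
  rw [Real.norm_eq_abs]
  calc |f s t| ≤ C / ((1 + |s|) ^ 2 * (1 + t) ^ 2) := hC s t (le_of_lt ht)
    _ = (C / (1 + |s|) ^ 2) * ((1 + t) ^ 2)⁻¹ := by
        rw [div_mul_eq_div_div, div_eq_mul_inv]

/-- integrability in `s` over `ℝ`, for fixed `t ≥ 0`. -/
lemma Dcy.intS {f : ℝ → ℝ → ℝ} (hf : Dcy f) (hc : ∀ t, Continuous fun s => f s t)
    {t : ℝ} (ht : 0 ≤ t) : Integrable (fun s => f s t) volume := by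
  obtain ⟨C, hC0, hC⟩ := hf 2
  apply Integrable.mono' (g := fun s => (C / (1 + t) ^ 2) * ((1 + |s|) ^ 2)⁻¹)
    (integrable_aux1.const_mul _) ((hc t).aestronglyMeasurable)
  filter_upwards with s
  rw [Real.norm_eq_abs]
  calc |f s t| ≤ C / ((1 + |s|) ^ 2 * (1 + t) ^ 2) := hC s t ht
    _ = (C / (1 + t) ^ 2) * ((1 + |s|) ^ 2)⁻¹ := by
        rw [mul_comm ((1 + |s|)^2), div_mul_eq_div_div, div_eq_mul_inv]

/-- product-measure integrability on the half plane. -/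
lemma Dcy.intProd {f : ℝ → ℝ → ℝ} (hf : Dcy f)
    (hc : Continuous fun p : ℝ × ℝ => f p.1 p.2) :
    Integrable (fun p : ℝ × ℝ => f p.1 p.2) (volume.prod (volume.restrict (Ioi 0))) := by
  obtain ⟨C, hC0, hC⟩ := hf 2
  have hb : Integrable (fun p : ℝ × ℝ => (C * ((1 + |p.1|) ^ 2)⁻¹) * ((1 + p.2) ^ 2)⁻¹)
      (volume.prod (volume.restrict (Ioi 0))) :=
    (integrable_aux1.const_mul C).mul_prod integrable_aux2
  apply hb.mono' hc.aestronglyMeasurable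
  have hae : ∀ᵐ p : ℝ × ℝ ∂(volume.prod (volume.restrict (Ioi 0))), p.2 ∈ Ioi (0:ℝ) := by
    rw [ae_iff]
    have hset : {p : ℝ × ℝ | ¬ p.2 ∈ Ioi (0:ℝ)} = (univ : Set ℝ) ×ˢ (Iic (0:ℝ)) := by
      ext p; simp [not_lt]
    rw [hset, Measure.prod_prod, Measure.restrict_apply measurableSet_Iic]
    simp [Set.Iic_inter_Ioi]
  filter_upwards [hae] with p hp
  rw [Real.norm_eq_abs]
  calc |f p.1 p.2| ≤ C / ((1 + |p.1|) ^ 2 * (1 + p.2) ^ 2) := hC p.1 p.2 (le_of_lt hp)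
    _ = (C * ((1 + |p.1|) ^ 2)⁻¹) * ((1 + p.2) ^ 2)⁻¹ := by
        rw [div_eq_mul_inv, mul_inv, mul_assoc]

lemma Dcy.tendstoT {f : ℝ → ℝ → ℝ} (hf : Dcy f) (s : ℝ) :
    Tendsto (f s) atTop (𝓝 0) := by
  obtain ⟨C, hC0, hC⟩ := hf 1
  apply squeeze_zero_norm' (a := fun t => C / (1 + t))
  · filter_upwards [eventually_ge_atTop (0:ℝ)] with t ht
    rw [Real.norm_eq_abs]
    calc |f s t| ≤ C / ((1 + |s|) ^ 1 * (1 + t) ^ 1) := hC s t ht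
      _ ≤ C / (1 + t) := by
          rw [pow_one, pow_one]
          gcongr
          nlinarith [abs_nonneg s]
  · exact tendsto_const_nhds.div_atTop (tendsto_atTop_add_const_left _ 1 tendsto_id)

lemma Dcy.tendstoSTop {f : ℝ → ℝ → ℝ} (hf : Dcy f) {t : ℝ} (ht : 0 ≤ t) :
    Tendsto (fun s => f s t) atTop (𝓝 0) := by
  obtain ⟨C, hC0, hC⟩ := hf 1
  apply squeeze_zero_norm' (a := fun s => C / (1 + s))
  · filter_upwards [eventually_ge_atTop (0:ℝ)] with s hs
    rw [Real.norm_eq_abs]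
    calc |f s t| ≤ C / ((1 + |s|) ^ 1 * (1 + t) ^ 1) := hC s t ht
      _ ≤ C / (1 + s) := by
          rw [pow_one, pow_one, abs_of_nonneg hs]
          gcongr
          nlinarith
  · exact tendsto_const_nhds.div_atTop (tendsto_atTop_add_const_left _ 1 tendsto_id)

lemma Dcy.tendstoSBot {f : ℝ → ℝ → ℝ} (hf : Dcy f) {t : ℝ} (ht : 0 ≤ t) :
    Tendsto (fun s => f s t) atBot (𝓝 0) := by
  obtain ⟨C, hC0, hC⟩ := hf 1
  apply squeeze_zero_norm' (a := fun s => C / (1 - s))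
  · filter_upwards [eventually_le_atBot (0:ℝ)] with s hs
    rw [Real.norm_eq_abs]
    calc |f s t| ≤ C / ((1 + |s|) ^ 1 * (1 + t) ^ 1) := hC s t ht
      _ ≤ C / (1 - s) := by
          rw [pow_one, pow_one, abs_of_nonpos hs]
          have h1 : (0:ℝ) < 1 - s := by linarith
          have h2 : 1 - s ≤ (1 + -s) * (1 + t) := by
            nlinarith [mul_nonneg ht (neg_nonneg.2 hs)]
          gcongr
  · apply tendsto_const_nhds.div_atTop
    have : Tendsto (fun s : ℝ => -s) atBot atTop := tendsto_neg_atBot_atTop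
    have h2 := tendsto_atTop_add_const_left (f := fun s : ℝ => -s) atBot 1 this
    apply h2.congr fun s => by ring

lemma intHalf_eq_prod {f : ℝ → ℝ → ℝ}
    (hf : Integrable (fun p : ℝ × ℝ => f p.1 p.2) (volume.prod (volume.restrict (Ioi 0)))) :
    intHalf f = ∫ p : ℝ × ℝ, f p.1 p.2 ∂(volume.prod (volume.restrict (Ioi 0))) :=
  MeasureTheory.integral_integral hf

lemma intHalf_add {f g : ℝ → ℝ → ℝ}
    (hf : Integrable (fun p : ℝ × ℝ => f p.1 p.2) (volume.prod (volume.restrict (Ioi 0))))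
    (hg : Integrable (fun p : ℝ × ℝ => g p.1 p.2) (volume.prod (volume.restrict (Ioi 0)))) :
    intHalf (fun s t => f s t + g s t) = intHalf f + intHalf g := by
  rw [intHalf_eq_prod hf, intHalf_eq_prod hg, intHalf_eq_prod (f := fun s t => f s t + g s t) (hf.add hg)]
  exact integral_add hf hg

lemma integral_pd2_Ioi {B : ℝ → ℝ → ℝ} (hB : Smo B) (s : ℝ)
    (hint : IntegrableOn (fun t => pd2 B s t) (Ioi 0) volume)
    (hlim : Tendsto (B s) atTop (𝓝 0)) :
    ∫ t in Ioi (0:ℝ), pd2 B s t = - B s 0 := by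
  have h := integral_Ioi_of_hasDerivAt_of_tendsto
    (f := fun y => B s y) (f' := fun t => pd2 B s t) (a := 0) (m := 0)
    ((hB.contSlice2 s).continuousWithinAt)
    (fun x _ => hB.hasDerivAt2 s x) hint hlim
  simpa using h

lemma integral_pd1_line {A : ℝ → ℝ → ℝ} (hA : Smo A) (t : ℝ)
    (hint : Integrable (fun s => pd1 A s t) volume)
    (htop : Tendsto (fun s => A s t) atTop (𝓝 0))
    (hbot : Tendsto (fun s => A s t) atBot (𝓝 0)) :
    ∫ s : ℝ, pd1 A s t = 0 := by
  have hIic := integral_Iic_of_hasDerivAt_of_tendsto'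
    (f := fun s => A s t) (f' := fun s => pd1 A s t) (a := 0) (m := 0)
    (fun x _ => hA.hasDerivAt1 x t) hint.integrableOn hbot
  have hIoi := integral_Ioi_of_hasDerivAt_of_tendsto
    (f := fun s => A s t) (f' := fun s => pd1 A s t) (a := 0) (m := 0)
    ((hA.contSlice1 t).continuousWithinAt)
    (fun x _ => hA.hasDerivAt1 x t) hint.integrableOn htop
  rw [← intervalIntegral.integral_Iic_add_Ioi hint.integrableOn hint.integrableOn, hIic, hIoi]
  ring

lemma Smo.congr {f g : ℝ → ℝ → ℝ} (hg : Smo g) (h : ∀ s t, f s t = g s t) : Smo f := by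
  have e : (fun p : ℝ × ℝ => f p.1 p.2) = fun p : ℝ × ℝ => g p.1 p.2 :=
    funext fun p => h p.1 p.2
  intro n; rw [e]; exact hg n

lemma smo_sq : Smo fun s _ : ℝ => s ^ 2 := fun n => contDiff_fst.pow 2

lemma Smo.pd2_comm1 {v : ℝ → ℝ → ℝ} (hv : Smo v) : pd2 (pd1 v) = pd1 (pd2 v) :=
  funext fun s => funext fun t => (hv.clairaut s t).symm

lemma Smo.pd2_comm2 {v : ℝ → ℝ → ℝ} (hv : Smo v) :
    pd2 (pd1 (pd1 v)) = pd1 (pd1 (pd2 v)) := by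
  rw [hv.smooth_pd1.pd2_comm1, hv.pd2_comm1]

lemma Smo.pd2_comm3 {v : ℝ → ℝ → ℝ} (hv : Smo v) :
    pd2 (pd1 (pd1 (pd1 v))) = pd1 (pd1 (pd1 (pd2 v))) := by
  rw [hv.smooth_pd1.smooth_pd1.pd2_comm1, hv.pd2_comm2]

lemma HasDerivAt.congr_d {F : ℝ → ℝ} {d d' x : ℝ} (h : HasDerivAt F d x) (e : d' = d) :
    HasDerivAt F d' x := e ▸ h

end Helpers

open Filter Topology in
/-- Lemma 2.7, first part: `(H(θ) − σ) ∂_s f₀ = −t ∂_s²u + 2 sin θ V_θ f₀` on `ℝ²₊`,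
and the right-hand side is orthogonal to `u`. -/
theorem dsf0_equation (θ : ℝ) (hθ : θ ∈ Set.Ioo 0 (π/2))
    (u : ℝ → ℝ → ℝ) (σ : ℝ) (hu : IsModelEigen θ u σ)
    (f₀ : ℝ → ℝ → ℝ)
    (hf₀ : ∀ s t : ℝ, f₀ s t =
      (2 * Real.sin (2*θ))⁻¹ * (Real.sin θ ^ 2 * s^2 * u s t - pd1 (pd1 u) s t)) :
    (∀ s t : ℝ, 0 ≤ t → Hop θ (pd1 f₀) s t - σ * pd1 f₀ s t =
        - t * pd1 (pd1 u) s t + 2 * Real.sin θ * Vpot θ s t * f₀ s t) ∧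
    intHalf (fun s t =>
        (- t * pd1 (pd1 u) s t + 2 * Real.sin θ * Vpot θ s t * f₀ s t) * u s t) = 0 := by
  obtain ⟨hθ1, hθ2⟩ := hθ
  have hpi := Real.pi_pos
  have hsin : 0 < Real.sin θ := Real.sin_pos_of_pos_of_lt_pi hθ1 (by linarith)
  have hcos : 0 < Real.cos θ := Real.cos_pos_of_mem_Ioo ⟨by linarith, hθ2⟩
  set c : ℝ := (2 * Real.sin (2*θ))⁻¹ with hc
  have su : Smo u := hu.smooth
  have su1 : Smo (pd1 u) := su.smooth_pd1
  have su2 : Smo (pd1 (pd1 u)) := su1.smooth_pd1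
  have su3 : Smo (pd1 (pd1 (pd1 u))) := su2.smooth_pd1
  have su4 : Smo (pd1 (pd1 (pd1 (pd1 u)))) := su3.smooth_pd1
  have sw : Smo (pd2 u) := su.smooth_pd2
  have sw1 : Smo (pd1 (pd2 u)) := sw.smooth_pd1
  have sw2 : Smo (pd1 (pd1 (pd2 u))) := sw1.smooth_pd1
  have sw3 : Smo (pd1 (pd1 (pd1 (pd2 u)))) := sw2.smooth_pd1
  have sq : Smo (pd2 (pd2 u)) := sw.smooth_pd2
  have sf₀ : Smo f₀ :=
    Smo.congr (((((smo_const (Real.sin θ ^ 2)).mulF smo_sq).mulF su).subF su2).constMul c) hf₀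
  have sg : Smo (pd1 f₀) := sf₀.smooth_pd1
  have sg1 : Smo (pd1 (pd1 f₀)) := sg.smooth_pd1
  have sg2 : Smo (pd1 (pd1 (pd1 f₀))) := sg1.smooth_pd1
  have sgt : Smo (pd2 (pd1 f₀)) := sg.smooth_pd2
  have sgtt : Smo (pd2 (pd2 (pd1 f₀))) := sgt.smooth_pd2
  -- formulas for derivatives of f₀
  have hG : ∀ s t : ℝ, pd1 f₀ s t =
      c * (Real.sin θ ^ 2 * (2*s*u s t + s^2*pd1 u s t) - pd1 (pd1 (pd1 u)) s t) := by
    intro s t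
    refine pd1_eq_of (fun x => hf₀ x t) ?_
    have hp : HasDerivAt (fun x : ℝ => Real.sin θ ^ 2 * x ^ 2) (Real.sin θ ^ 2 * (2*s)) s :=
      ((hasDerivAt_pow 2 s).const_mul (Real.sin θ ^ 2)).congr_d (by ring)
    exact (((hp.mul (su.hasDerivAt1 s t)).sub (su2.hasDerivAt1 s t)).const_mul c).congr_d
      (by ring)
  have hG1 : ∀ s t : ℝ, pd1 (pd1 f₀) s t =
      c * (Real.sin θ ^ 2 * (2*u s t + 4*s*pd1 u s t + s^2*pd1 (pd1 u) s t)
        - pd1 (pd1 (pd1 (pd1 u))) s t) := by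
    intro s t
    refine pd1_eq_of (fun x => hG x t) ?_
    have ha : HasDerivAt (fun x : ℝ => 2*x*u x t) (2*u s t + 2*s*pd1 u s t) s :=
      (((hasDerivAt_id' (x := s)).const_mul 2).mul (su.hasDerivAt1 s t)).congr_d (by ring)
    have hb : HasDerivAt (fun x : ℝ => x^2*pd1 u x t)
        (2*s*pd1 u s t + s^2*pd1 (pd1 u) s t) s :=
      ((hasDerivAt_pow 2 s).mul (su1.hasDerivAt1 s t)).congr_d (by ring)
    exact ((((ha.add hb).const_mul (Real.sin θ ^ 2)).sub
      (su3.hasDerivAt1 s t)).const_mul c).congr_d (by ring)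
  have hG2 : ∀ s t : ℝ, pd1 (pd1 (pd1 f₀)) s t =
      c * (Real.sin θ ^ 2 * (6*pd1 u s t + 6*s*pd1 (pd1 u) s t + s^2*pd1 (pd1 (pd1 u)) s t)
        - pd1 (pd1 (pd1 (pd1 (pd1 u)))) s t) := by
    intro s t
    refine pd1_eq_of (fun x => hG1 x t) ?_
    have ha : HasDerivAt (fun x : ℝ => 2*u x t) (2*pd1 u s t) s :=
      (su.hasDerivAt1 s t).const_mul 2
    have hb : HasDerivAt (fun x : ℝ => 4*x*pd1 u x t)
        (4*pd1 u s t + 4*s*pd1 (pd1 u) s t) s :=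
      (((hasDerivAt_id' (x := s)).const_mul 4).mul (su1.hasDerivAt1 s t)).congr_d (by ring)
    have hcc : HasDerivAt (fun x : ℝ => x^2*pd1 (pd1 u) x t)
        (2*s*pd1 (pd1 u) s t + s^2*pd1 (pd1 (pd1 u)) s t) s :=
      ((hasDerivAt_pow 2 s).mul (su2.hasDerivAt1 s t)).congr_d (by ring)
    exact (((((ha.add hb).add hcc).const_mul (Real.sin θ ^ 2)).sub
      (su4.hasDerivAt1 s t)).const_mul c).congr_d (by ring)
  have hGt : ∀ s t : ℝ, pd2 (pd1 f₀) s t =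
      c * (Real.sin θ ^ 2 * (2*s*pd2 u s t + s^2*pd1 (pd2 u) s t)
        - pd1 (pd1 (pd1 (pd2 u))) s t) := by
    intro s t
    refine pd2_eq_of (fun y => hG s y) ?_
    have ha : HasDerivAt (fun y : ℝ => 2*s*u s y) (2*s*pd2 u s t) t :=
      (su.hasDerivAt2 s t).const_mul (2*s)
    have hb : HasDerivAt (fun y : ℝ => s^2*pd1 u s y) (s^2*pd2 (pd1 u) s t) t :=
      (su1.hasDerivAt2 s t).const_mul (s^2)
    refine ((((ha.add hb).const_mul (Real.sin θ ^ 2)).sub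
      (su3.hasDerivAt2 s t)).const_mul c).congr_d ?_
    rw [← su.pd2_comm3, ← su.pd2_comm1]
  have hGtt : ∀ s t : ℝ, pd2 (pd2 (pd1 f₀)) s t =
      c * (Real.sin θ ^ 2 * (2*s*pd2 (pd2 u) s t + s^2*pd1 (pd2 (pd2 u)) s t)
        - pd1 (pd1 (pd1 (pd2 (pd2 u)))) s t) := by
    intro s t
    refine pd2_eq_of (fun y => hGt s y) ?_
    have ha : HasDerivAt (fun y : ℝ => 2*s*pd2 u s y) (2*s*pd2 (pd2 u) s t) t :=
      (sw.hasDerivAt2 s t).const_mul (2*s)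
    have hb : HasDerivAt (fun y : ℝ => s^2*pd1 (pd2 u) s y) (s^2*pd2 (pd1 (pd2 u)) s t) t :=
      (sw1.hasDerivAt2 s t).const_mul (s^2)
    refine ((((ha.add hb).const_mul (Real.sin θ ^ 2)).sub
      (sw3.hasDerivAt2 s t)).const_mul c).congr_d ?_
    rw [← sw.pd2_comm3, ← sw.pd2_comm1]
  -- eigenvalue equation and its s-derivatives
  have heig : ∀ s t : ℝ, 0 ≤ t → pd2 (pd2 u) s t =
      -pd1 (pd1 u) s t + ((Vpot θ s t)^2 - σ) * u s t := by
    intro s t ht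
    have h := hu.eigen s t ht
    simp only [Hop] at h
    linear_combination -h
  have hVd : ∀ t s : ℝ, HasDerivAt (fun x => Vpot θ x t) (-Real.sin θ) s := by
    intro t s
    have h : HasDerivAt (fun x : ℝ => t * Real.cos θ - x * Real.sin θ)
        (0 - 1 * Real.sin θ) s :=
      (hasDerivAt_const s _).sub ((hasDerivAt_id' (x := s)).mul_const _)
    exact h.congr_d (by ring)
  have hq1 : ∀ s t : ℝ, 0 ≤ t → pd1 (pd2 (pd2 u)) s t =
      -pd1 (pd1 (pd1 u)) s t - 2*Real.sin θ*Vpot θ s t*u s t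
        + ((Vpot θ s t)^2 - σ)*pd1 u s t := by
    intro s t ht
    refine pd1_eq_of (fun x => heig x t ht) ?_
    have hb : HasDerivAt (fun x : ℝ => ((Vpot θ x t)^2 - σ) * u x t)
        (2*Vpot θ s t*(-Real.sin θ)*u s t + ((Vpot θ s t)^2 - σ)*pd1 u s t) s :=
      ((((hVd t s).pow 2).sub_const σ).mul (su.hasDerivAt1 s t)).congr_d (by simp only [Pi.pow_apply]; ring)
    exact ((su2.hasDerivAt1 s t).neg.add hb).congr_d (by ring)
  have hq2 : ∀ s t : ℝ, 0 ≤ t → pd1 (pd1 (pd2 (pd2 u))) s t =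
      -pd1 (pd1 (pd1 (pd1 u))) s t + 2*Real.sin θ^2*u s t
        - 4*Real.sin θ*Vpot θ s t*pd1 u s t + ((Vpot θ s t)^2 - σ)*pd1 (pd1 u) s t := by
    intro s t ht
    refine pd1_eq_of (fun x => hq1 x t ht) ?_
    have hb : HasDerivAt (fun x : ℝ => 2*Real.sin θ*Vpot θ x t*u x t)
        (2*Real.sin θ*(-Real.sin θ)*u s t + 2*Real.sin θ*Vpot θ s t*pd1 u s t) s := by
      have h1 := (((hVd t s).const_mul (2*Real.sin θ)).mul (su.hasDerivAt1 s t))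
      exact h1.congr_d (by ring)
    have hcc : HasDerivAt (fun x : ℝ => ((Vpot θ x t)^2 - σ) * pd1 u x t)
        (2*Vpot θ s t*(-Real.sin θ)*pd1 u s t + ((Vpot θ s t)^2 - σ)*pd1 (pd1 u) s t) s :=
      ((((hVd t s).pow 2).sub_const σ).mul (su1.hasDerivAt1 s t)).congr_d (by simp only [Pi.pow_apply]; ring)
    exact (((su3.hasDerivAt1 s t).neg.sub hb).add hcc).congr_d (by ring)
  have hq3 : ∀ s t : ℝ, 0 ≤ t → pd1 (pd1 (pd1 (pd2 (pd2 u)))) s t =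
      -pd1 (pd1 (pd1 (pd1 (pd1 u)))) s t + 6*Real.sin θ^2*pd1 u s t
        - 6*Real.sin θ*Vpot θ s t*pd1 (pd1 u) s t
        + ((Vpot θ s t)^2 - σ)*pd1 (pd1 (pd1 u)) s t := by
    intro s t ht
    refine pd1_eq_of (fun x => hq2 x t ht) ?_
    have ha : HasDerivAt (fun x : ℝ => 2*Real.sin θ^2*u x t) (2*Real.sin θ^2*pd1 u s t) s :=
      (su.hasDerivAt1 s t).const_mul _
    have hb : HasDerivAt (fun x : ℝ => 4*Real.sin θ*Vpot θ x t*pd1 u x t)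
        (4*Real.sin θ*(-Real.sin θ)*pd1 u s t + 4*Real.sin θ*Vpot θ s t*pd1 (pd1 u) s t) s := by
      have h1 := (((hVd t s).const_mul (4*Real.sin θ)).mul (su1.hasDerivAt1 s t))
      exact h1.congr_d (by ring)
    have hcc : HasDerivAt (fun x : ℝ => ((Vpot θ x t)^2 - σ) * pd1 (pd1 u) x t)
        (2*Vpot θ s t*(-Real.sin θ)*pd1 (pd1 u) s t
          + ((Vpot θ s t)^2 - σ)*pd1 (pd1 (pd1 u)) s t) s :=
      ((((hVd t s).pow 2).sub_const σ).mul (su2.hasDerivAt1 s t)).congr_d (by simp only [Pi.pow_apply]; ring)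
    exact ((((su4.hasDerivAt1 s t).neg.add ha).sub hb).add hcc).congr_d (by ring)
  -- Part 1
  have hsin2 : Real.sin θ ≠ 0 := ne_of_gt hsin
  have hcos2 : Real.cos θ ≠ 0 := ne_of_gt hcos
  have part1 : ∀ s t : ℝ, 0 ≤ t → Hop θ (pd1 f₀) s t - σ * pd1 f₀ s t =
      - t * pd1 (pd1 u) s t + 2 * Real.sin θ * Vpot θ s t * f₀ s t := by
    intro s t ht
    have hVv : Vpot θ s t = t*Real.cos θ - s*Real.sin θ := rfl
    simp only [Hop]
    rw [hG2 s t, hGtt s t, hG s t, hf₀ s t, heig s t ht, hq1 s t ht, hq3 s t ht, hVv, hc,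
      Real.sin_two_mul]
    field_simp
    ring
  refine ⟨part1, ?_⟩
  -- decay family
  have dS := hu.schwartz
  have d_u : Dcy u := dS.dcy 0 0
  have d_u1 : Dcy (pd1 u) := dS.dcy 1 0
  have d_u2 : Dcy (pd1 (pd1 u)) := dS.dcy 2 0
  have d_u3 : Dcy (pd1 (pd1 (pd1 u))) := dS.dcy 3 0
  have d_u4 : Dcy (pd1 (pd1 (pd1 (pd1 u)))) := dS.dcy 4 0
  have d_u5 : Dcy (pd1 (pd1 (pd1 (pd1 (pd1 u))))) := dS.dcy 5 0
  have d_w : Dcy (pd2 u) := dS.dcy 0 1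
  have d_w1 : Dcy (pd1 (pd2 u)) := dS.dcy 1 1
  have d_w3 : Dcy (pd1 (pd1 (pd1 (pd2 u)))) := dS.dcy 3 1
  have d_q : Dcy (pd2 (pd2 u)) := dS.dcy 0 2
  have d_q1 : Dcy (pd1 (pd2 (pd2 u))) := dS.dcy 1 2
  have d_q3 : Dcy (pd1 (pd1 (pd1 (pd2 (pd2 u))))) := dS.dcy 3 2
  have d_g : Dcy (pd1 f₀) := by
    refine Dcy.congr (g := fun s t => c * (Real.sin θ ^ 2 * (2*(s*u s t) + s*(s*pd1 u s t))
      - pd1 (pd1 (pd1 u)) s t)) ?_ ?_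
    · exact ((((d_u.mulS.constMul 2).addF d_u1.mulS.mulS).constMul
        (Real.sin θ ^ 2)).subF d_u3).constMul c
    · intro s t ht; rw [hG s t]; ring
  have d_g1 : Dcy (pd1 (pd1 f₀)) := by
    refine Dcy.congr (g := fun s t => c * (Real.sin θ ^ 2 *
      (2*u s t + 4*(s*pd1 u s t) + s*(s*pd1 (pd1 u) s t))
      - pd1 (pd1 (pd1 (pd1 u))) s t)) ?_ ?_
    · exact (((((d_u.constMul 2).addF (d_u1.mulS.constMul 4)).addF
        d_u2.mulS.mulS).constMul (Real.sin θ ^ 2)).subF d_u4).constMul c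
    · intro s t ht; rw [hG1 s t]; ring
  have d_g2 : Dcy (pd1 (pd1 (pd1 f₀))) := by
    refine Dcy.congr (g := fun s t => c * (Real.sin θ ^ 2 *
      (6*pd1 u s t + 6*(s*pd1 (pd1 u) s t) + s*(s*pd1 (pd1 (pd1 u)) s t))
      - pd1 (pd1 (pd1 (pd1 (pd1 u)))) s t)) ?_ ?_
    · exact (((((d_u1.constMul 6).addF (d_u2.mulS.constMul 6)).addF
        d_u3.mulS.mulS).constMul (Real.sin θ ^ 2)).subF d_u5).constMul c
    · intro s t ht; rw [hG2 s t]; ring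
  have d_gt : Dcy (pd2 (pd1 f₀)) := by
    refine Dcy.congr (g := fun s t => c * (Real.sin θ ^ 2 *
      (2*(s*pd2 u s t) + s*(s*pd1 (pd2 u) s t)) - pd1 (pd1 (pd1 (pd2 u))) s t)) ?_ ?_
    · exact ((((d_w.mulS.constMul 2).addF d_w1.mulS.mulS).constMul
        (Real.sin θ ^ 2)).subF d_w3).constMul c
    · intro s t ht; rw [hGt s t]; ring
  have d_gtt : Dcy (pd2 (pd2 (pd1 f₀))) := by
    refine Dcy.congr (g := fun s t => c * (Real.sin θ ^ 2 *
      (2*(s*pd2 (pd2 u) s t) + s*(s*pd1 (pd2 (pd2 u)) s t))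
      - pd1 (pd1 (pd1 (pd2 (pd2 u)))) s t)) ?_ ?_
    · exact ((((d_q.mulS.constMul 2).addF d_q1.mulS.mulS).constMul
        (Real.sin θ ^ 2)).subF d_q3).constMul c
    · intro s t ht; rw [hGtt s t]; ring
  -- the boundary-term functions
  set A : ℝ → ℝ → ℝ :=
    fun a b => pd1 f₀ a b * pd1 u a b - pd1 (pd1 f₀) a b * u a b with hA_def
  set B : ℝ → ℝ → ℝ :=
    fun a b => pd1 f₀ a b * pd2 u a b - pd2 (pd1 f₀) a b * u a b with hB_def
  set P : ℝ → ℝ → ℝ :=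
    fun a b => pd1 f₀ a b * pd1 (pd1 u) a b - pd1 (pd1 (pd1 f₀)) a b * u a b with hP_def
  set Q : ℝ → ℝ → ℝ :=
    fun a b => pd1 f₀ a b * pd2 (pd2 u) a b - pd2 (pd2 (pd1 f₀)) a b * u a b with hQ_def
  have sA : Smo A := by rw [hA_def]; exact (sg.mulF su1).subF (sg1.mulF su)
  have sB : Smo B := by rw [hB_def]; exact (sg.mulF sw).subF (sgt.mulF su)
  have sP : Smo P := by rw [hP_def]; exact (sg.mulF su2).subF (sg2.mulF su)
  have sQ : Smo Q := by rw [hQ_def]; exact (sg.mulF sq).subF (sgtt.mulF su)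
  have d_A : Dcy A := by rw [hA_def]; exact (d_g.mulF d_u1).subF (d_g1.mulF d_u)
  have d_B : Dcy B := by rw [hB_def]; exact (d_g.mulF d_w).subF (d_gt.mulF d_u)
  have d_P : Dcy P := by rw [hP_def]; exact (d_g.mulF d_u2).subF (d_g2.mulF d_u)
  have d_Q : Dcy Q := by rw [hQ_def]; exact (d_g.mulF d_q).subF (d_gtt.mulF d_u)
  have hA' : ∀ s t : ℝ, pd1 A s t = P s t := by
    intro s t
    refine pd1_eq_of (F := fun x => pd1 f₀ x t * pd1 u x t - pd1 (pd1 f₀) x t * u x t)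
      (fun x => by rw [hA_def]) ?_
    exact (((sg.hasDerivAt1 s t).mul (su1.hasDerivAt1 s t)).sub
      ((sg1.hasDerivAt1 s t).mul (su.hasDerivAt1 s t))).congr_d
      (by simp only [hP_def]; ring)
  have hB' : ∀ s t : ℝ, pd2 B s t = Q s t := by
    intro s t
    refine pd2_eq_of (F := fun y => pd1 f₀ s y * pd2 u s y - pd2 (pd1 f₀) s y * u s y)
      (fun y => by rw [hB_def]) ?_
    exact (((sg.hasDerivAt2 s t).mul (sw.hasDerivAt2 s t)).sub
      ((sgt.hasDerivAt2 s t).mul (su.hasDerivAt2 s t))).congr_d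
      (by simp only [hQ_def]; ring)
  -- pointwise Green identity for the integrand
  have hZPQ : ∀ s t : ℝ, 0 ≤ t →
      (- t * pd1 (pd1 u) s t + 2 * Real.sin θ * Vpot θ s t * f₀ s t) * u s t
        = P s t + Q s t := by
    intro s t ht
    have e1 := part1 s t ht
    simp only [Hop] at e1
    have e0 := heig s t ht
    simp only [hP_def, hQ_def]
    linear_combination (-(u s t)) * e1 - (pd1 f₀ s t) * e0
  -- integral computation
  have contP : Continuous (fun p : ℝ × ℝ => P p.1 p.2) := (sP 0).continuous
  have contQ : Continuous (fun p : ℝ × ℝ => Q p.1 p.2) := (sQ 0).continuous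
  have intP := d_P.intProd contP
  have intQ := d_Q.intProd contQ
  have step1 : intHalf (fun s t =>
      (- t * pd1 (pd1 u) s t + 2 * Real.sin θ * Vpot θ s t * f₀ s t) * u s t)
      = intHalf (fun s t => P s t + Q s t) := by
    simp only [intHalf]
    refine integral_congr_ae (Filter.Eventually.of_forall fun s => ?_)
    exact setIntegral_congr_fun measurableSet_Ioi (fun t ht => hZPQ s t (le_of_lt ht))
  have step2 : intHalf (fun s t => P s t + Q s t) = intHalf P + intHalf Q :=
    intHalf_add intP intQ
  have stepQ : intHalf Q = 0 := by
    have h0 : ∀ s : ℝ, (∫ t in Set.Ioi (0:ℝ), Q s t) = 0 := by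
      intro s
      have hQB : (fun t => Q s t) = fun t => pd2 B s t := funext fun t => (hB' s t).symm
      have hint : IntegrableOn (fun t => pd2 B s t) (Set.Ioi 0) volume := by
        rw [← hQB]; exact d_Q.intT (fun s' => sQ.contSlice2 s') s
      have hftc := integral_pd2_Ioi sB s hint (d_B.tendstoT s)
      have hw0 : pd2 u s 0 = 0 := hu.neumann s
      have hgt0 : pd2 (pd1 f₀) s 0 = 0 := by
        have h2 : ∀ x, pd1 (pd2 u) x 0 = 0 := fun x => pd1_zero_slice hu.neumann x
        have h3 : ∀ x, pd1 (pd1 (pd2 u)) x 0 = 0 := fun x => pd1_zero_slice h2 x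
        have h4 : pd1 (pd1 (pd1 (pd2 u))) s 0 = 0 := pd1_zero_slice h3 s
        rw [hGt s 0, hw0, h2 s, h4]; ring
      have hB0 : B s 0 = 0 := by rw [hB_def]; simp only []; rw [hw0, hgt0]; ring
      calc (∫ t in Set.Ioi (0:ℝ), Q s t) = ∫ t in Set.Ioi (0:ℝ), pd2 B s t := by rw [hQB]
        _ = - B s 0 := hftc
        _ = 0 := by rw [hB0]; ring
    calc intHalf Q = ∫ s : ℝ, (0:ℝ) := by
          simp only [intHalf]
          exact integral_congr_ae (Filter.Eventually.of_forall h0)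
      _ = 0 := integral_zero _ _
  have stepP : intHalf P = 0 := by
    have hswap := MeasureTheory.integral_integral_swap (f := P) intP
    have hline : ∀ t ∈ Set.Ioi (0:ℝ), (∫ s : ℝ, P s t) = 0 := by
      intro t ht
      have hPA : (fun s => P s t) = fun s => pd1 A s t := funext fun s => (hA' s t).symm
      have hint : Integrable (fun s => pd1 A s t) volume := by
        rw [← hPA]; exact d_P.intS (fun t' => sP.contSlice1 t') (le_of_lt ht)
      calc (∫ s : ℝ, P s t) = ∫ s : ℝ, pd1 A s t := by rw [hPA]
        _ = 0 := integral_pd1_line sA t hint (d_A.tendstoSTop (le_of_lt ht))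
            (d_A.tendstoSBot (le_of_lt ht))
    calc intHalf P = ∫ t in Set.Ioi (0:ℝ), ∫ s : ℝ, P s t := hswap
      _ = ∫ t in Set.Ioi (0:ℝ), (0:ℝ) :=
          setIntegral_congr_fun measurableSet_Ioi (fun t ht => hline t ht)
      _ = 0 := by simp
  rw [step1, step2, stepP, stepQ]
  norm_num
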